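/- arXiv:2103.10227 — 3 statements merged into one kernel-verified Lean document; each statement's English description precedes it below -/
import Mathlib

section
/- Let b ≥ 0 and let a : [0,∞) → [0,∞) be differentiable with a(0) + b = 1 and (a'(t))² ≤ a(t)·b for all t ≥ 0. Then a(t) + b ≥ e^{−t/2} for all t ≥ 0; equivalently, 1/(a(t) + b) ≤ e^{t/2}. -/
/-- if `b ≥ 0`, `a : [0,∞) → [0,∞)` is differentiable with `a(0) + b = 1`
and `(a'(t))² ≤ a(t)·b` for all `t ≥ 0`, then `a(t) + b ≥ e^{−t/2}` for all `t ≥ 0`;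
equivalently `1/(a(t)+b) ≤ e^{t/2}`. -/
theorem statement12 (b : ℝ) (hb : 0 ≤ b) (a : ℝ → ℝ)
    (ha : ∀ t, 0 ≤ t → 0 ≤ a t)
    (hdiff : ∀ t, 0 ≤ t → DifferentiableAt ℝ a t)
    (hinit : a 0 + b = 1)
    (hode : ∀ t, 0 ≤ t → (deriv a t) ^ 2 ≤ a t * b) :
    ∀ t, 0 ≤ t → Real.exp (-t / 2) ≤ a t + b ∧ 1 / (a t + b) ≤ Real.exp (t / 2) := by
  set g : ℝ → ℝ := fun t => Real.exp (t / 2) * (a t + b) with hg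
  have hgderiv : ∀ t : ℝ, 0 < t →
      HasDerivAt g (Real.exp (t / 2) * (1 / 2) * (a t + b)
        + Real.exp (t / 2) * deriv a t) t := by
    intro t ht
    have h1 : HasDerivAt (fun s : ℝ => Real.exp (s / 2)) (Real.exp (t / 2) * (1 / 2)) t := by
      have := ((hasDerivAt_id t).div_const 2).exp
      simpa using this
    have h2 : HasDerivAt (fun s => a s + b) (deriv a t) t :=
      ((hdiff t ht.le).hasDerivAt).add_const b
    exact h1.mul h2
  have hcontg : ContinuousOn g (Set.Ici 0) := by
    intro t ht
    exact (((Real.continuous_exp.comp (continuous_id.div_const 2)).continuousAt).mul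
      (((hdiff t ht).continuousAt).add continuousAt_const)).continuousWithinAt
  have hmono : MonotoneOn g (Set.Ici 0) := by
    apply monotoneOn_of_deriv_nonneg (convex_Ici 0) hcontg
    · intro t ht
      rw [interior_Ici] at ht
      exact (hgderiv t ht).differentiableAt.differentiableWithinAt
    · intro t ht
      rw [interior_Ici] at ht
      rw [(hgderiv t ht).deriv]
      have hexp : 0 < Real.exp (t / 2) := Real.exp_pos _
      have h1 := hode t ht.le
      have h2 := ha t ht.le
      have hder : -(a t + b) / 2 ≤ deriv a t := by
        nlinarith [sq_nonneg (deriv a t + (a t + b) / 2), sq_nonneg (a t - b)]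
      nlinarith
  intro t ht
  have hkey : 1 ≤ Real.exp (t / 2) * (a t + b) := by
    have := hmono (Set.self_mem_Ici) ht ht
    simpa [hg, hinit] using this
  have hexp : 0 < Real.exp (t / 2) := Real.exp_pos _
  have hmul : Real.exp (-t / 2) * Real.exp (t / 2) = 1 := by
    rw [← Real.exp_add]; ring_nf; exact Real.exp_zero
  have h1 : Real.exp (-t / 2) ≤ a t + b := by nlinarith
  refine ⟨h1, ?_⟩
  have hpos : 0 < a t + b := lt_of_lt_of_le (Real.exp_pos _) h1
  have := one_div_le_one_div_of_le (Real.exp_pos (-t / 2)) h1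
  calc 1 / (a t + b) ≤ 1 / Real.exp (-t / 2) := this
    _ = Real.exp (t / 2) := by
        rw [one_div, ← Real.exp_neg]; ring_nf
end

section
/- Let f : ℝ → ℝ be an increasing homeomorphism such that f − id and f⁻¹ − id are bounded and Lipschitz, and let y, V, H : ℝ → ℝ be Lipschitz functions with V and H nondecreasing and V', H' ∈ L¹(ℝ). Then the push-forward under y∘f of the measure (V∘f)'(ξ) dξ equals the push-forward under y of the measure V'(ξ) dξ, and likewise with V replaced by H; moreover, the function u defined by u(x) = U(ξ) whenever x = y(ξ) is unchanged when (y,U) is replaced by (y∘f, U∘f). In the paper's notation: if X, X̃ ∈ F satisfy X̃ = X • f for some f ∈ G, then M(X̃) = M(X). -/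
open MeasureTheory Filter Set Real
open scoped ENNReal Classical

noncomputable section

/-- A Lagrangian quadruple `X = (y, U, H, V)` of real-valued functions on `ℝ`. -/
structure LagQuad where
  y : ℝ → ℝ
  U : ℝ → ℝ
  H : ℝ → ℝ
  V : ℝ → ℝ

/-- The real-valued `L^p` norm of a function `ℝ → ℝ` (Lebesgue measure). -/
def nrm (p : ℝ≥0∞) (f : ℝ → ℝ) : ℝ := (eLpNorm f p volume).toReal

/-- `f` is bounded and Lipschitz. -/
def bddLip (f : ℝ → ℝ) : Prop := (∃ C, ∀ x, |f x| ≤ C) ∧ (∃ K, LipschitzWith K f)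

/-- The set `F` of Lagrangian coordinates, for the dissipation parameter `α`. -/
def inF (α : ℝ) (X : LagQuad) : Prop :=
  bddLip (fun ξ => X.y ξ - ξ) ∧ bddLip X.U ∧ bddLip X.H ∧ bddLip X.V ∧
  (∀ᵐ (ξ : ℝ) ∂volume, 0 ≤ deriv X.y ξ) ∧ (∀ᵐ (ξ : ℝ) ∂volume, 0 ≤ deriv X.H ξ) ∧
  (∃ c > (0 : ℝ), ∀ᵐ (ξ : ℝ) ∂volume, c ≤ deriv X.y ξ + deriv X.H ξ) ∧
  (∀ᵐ (ξ : ℝ) ∂volume, deriv X.y ξ * deriv X.V ξ = (deriv X.U ξ) ^ 2) ∧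
  (∀ᵐ (ξ : ℝ) ∂volume, 0 ≤ deriv X.V ξ ∧ deriv X.V ξ ≤ deriv X.H ξ) ∧
  (α = 1 → ∀ᵐ (ξ : ℝ) ∂volume,
    (deriv X.y ξ = 0 → deriv X.V ξ = 0) ∧ (0 < deriv X.y ξ → deriv X.V ξ = deriv X.H ξ)) ∧
  (α < 1 → ∃ κ : ℝ → ℝ, (∀ ξ, κ ξ = 1 - α ∨ κ ξ = 1) ∧
    (∀ᵐ (ξ : ℝ) ∂volume, deriv X.V ξ = κ ξ * deriv X.H ξ ∧ (deriv X.U ξ < 0 → κ ξ = 1)))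

/-- The subset `F₀ = {X ∈ F : y + H = id}`. -/
def inF0 (α : ℝ) (X : LagQuad) : Prop := inF α X ∧ ∀ ξ, X.y ξ + X.H ξ = ξ

/-- The wave-breaking time `τ` of a Lagrangian quadruple. -/
def tauOf (X : LagQuad) (ξ : ℝ) : ℝ≥0∞ :=
  if deriv X.U ξ < 0 then ENNReal.ofReal (-2 * deriv X.y ξ / deriv X.U ξ)
  else if deriv X.U ξ = 0 ∧ deriv X.y ξ = 0 then 0
  else ⊤

/-- `A = {ξ : U'(ξ) ≥ 0}`. -/
def Aset (X : LagQuad) : Set ℝ := {ξ | 0 ≤ deriv X.U ξ}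

/-- `Ω(t) = (A₁ ∩ A₂) ∪ {ξ : t < τ₁(ξ) = τ₂(ξ) < ∞}`. -/
def OmegaT (τ₁ τ₂ : ℝ → ℝ≥0∞) (t : ℝ) (X₁ X₂ : LagQuad) : Set ℝ :=
  (Aset X₁ ∩ Aset X₂) ∪ {ξ | ENNReal.ofReal t < τ₁ ξ ∧ τ₁ ξ = τ₂ ξ ∧ τ₂ ξ < ⊤}

/-- `G₁₂ = |V₁' − V₂'|·1_Ω + max(V₁',V₂')·1_{Ωᶜ}`. -/
def GfunT (τ₁ τ₂ : ℝ → ℝ≥0∞) (t : ℝ) (X₁ X₂ : LagQuad) (ξ : ℝ) : ℝ :=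
  (OmegaT τ₁ τ₂ t X₁ X₂).indicator (fun η => |deriv X₁.V η - deriv X₂.V η|) ξ
    + ((OmegaT τ₁ τ₂ t X₁ X₂)ᶜ).indicator (fun η => max (deriv X₁.V η) (deriv X₂.V η)) ξ

/-- The Lagrangian distance, with wave-breaking times `τ₁, τ₂` and time parameter `t`. -/
def ddT (τ₁ τ₂ : ℝ → ℝ≥0∞) (t : ℝ) (X₁ X₂ : LagQuad) : ℝ :=
  nrm ⊤ (fun ξ => X₁.y ξ - X₂.y ξ) + nrm ⊤ (fun ξ => X₁.U ξ - X₂.U ξ)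
    + nrm 2 (fun ξ => deriv X₁.y ξ - deriv X₂.y ξ)
    + nrm 2 (fun ξ => deriv X₁.U ξ - deriv X₂.U ξ)
    + nrm ⊤ (fun ξ => X₁.H ξ - X₂.H ξ)
    + nrm 1 (GfunT τ₁ τ₂ t X₁ X₂) + nrm 2 (GfunT τ₁ τ₂ t X₁ X₂)

/-- The metric `d` on `F`. -/
def dmet (X₁ X₂ : LagQuad) : ℝ := ddT (tauOf X₁) (tauOf X₂) 0 X₁ X₂

/-- The norm `‖X_A − X_B‖` (sum of the four sup-norms). -/
def xnorm (XA XB : LagQuad) : ℝ :=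
  nrm ⊤ (fun ξ => XA.y ξ - XB.y ξ) + nrm ⊤ (fun ξ => XA.U ξ - XB.U ξ)
    + nrm ⊤ (fun ξ => XA.H ξ - XB.H ξ) + nrm ⊤ (fun ξ => XA.V ξ - XB.V ξ)

/-- The relabelling group `G`. -/
def inG (f : ℝ → ℝ) : Prop :=
  Function.Bijective f ∧ bddLip (fun x => f x - x) ∧
    bddLip (fun x => Function.invFun f x - x) ∧
    MemLp (fun x => deriv f x - 1) 2 volume

/-- The relabelling action `X • f`. -/
def act (X : LagQuad) (f : ℝ → ℝ) : LagQuad :=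
  ⟨fun ξ => X.y (f ξ), fun ξ => X.U (f ξ), fun ξ => X.H (f ξ), fun ξ => X.V (f ξ)⟩

/-- `Π(X) = X • (y + H)⁻¹`. -/
def PiMap (X : LagQuad) : LagQuad := act X (Function.invFun (fun ξ => X.y ξ + X.H ξ))

/-- `J(X_A, X_B) = inf_{f,g ∈ G} ( d(X_A, X_B•f) + d(X_A•g, X_B) )`. -/
def Jmet (XA XB : LagQuad) : ℝ :=
  sInf {r | ∃ f g, inG f ∧ inG g ∧ r = dmet XA (act XB f) + dmet (act XA g) XB}

/-- `d_F`, the infimum over finite sequences in `F₀` joining `Π X_A` to `Π X_B`. -/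
def dFmet (α : ℝ) (XA XB : LagQuad) : ℝ :=
  sInf {r | ∃ (N : ℕ) (Xs : ℕ → LagQuad), (∀ n ≤ N, inF0 α (Xs n)) ∧
    Xs 0 = PiMap XA ∧ Xs N = PiMap XB ∧
    r = ∑ n ∈ Finset.range N, Jmet (Xs (n + 1)) (Xs n)}

/-- The set of points that have experienced wave breaking by time `t`. -/
def breakSet (X0 : LagQuad) (t : ℝ) : Set ℝ :=
  {η | 0 < tauOf X0 η ∧ tauOf X0 η ≤ ENNReal.ofReal t}

/-- `V(ξ,t) = ∫_{−∞}^ξ V₀'(η)(1 − α·1_{t ≥ τ(η) > 0}(η)) dη`. -/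
def Vsol (α : ℝ) (X0 : LagQuad) (t : ℝ) (ξ : ℝ) : ℝ :=
  ∫ η in Set.Iio ξ,
    deriv X0.V η * (1 - α * (breakSet X0 t).indicator (fun _ => (1 : ℝ)) η)

/-- `U(ξ,t) = U₀(ξ) + ∫₀ᵗ (½ V(ξ,s) − ¼ V_∞(s)) ds`. -/
def Usol (α : ℝ) (X0 : LagQuad) (t : ℝ) (ξ : ℝ) : ℝ :=
  X0.U ξ + ∫ s in (0:ℝ)..t,
    ((1 / 2) * Vsol α X0 s ξ - (1 / 4) * limUnder Filter.atTop (Vsol α X0 s))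

/-- `y(ξ,t) = y₀(ξ) + ∫₀ᵗ U(ξ,s) ds`. -/
def ysol (α : ℝ) (X0 : LagQuad) (t : ℝ) (ξ : ℝ) : ℝ :=
  X0.y ξ + ∫ s in (0:ℝ)..t, Usol α X0 s ξ

/-- The α-dissipative solution of the Lagrangian system at time `t`. -/
def sol (α : ℝ) (X0 : LagQuad) (t : ℝ) : LagQuad :=
  ⟨ysol α X0 t, Usol α X0 t, X0.H, Vsol α X0 t⟩

/-- The Eulerian velocity `u` of `M(X)`: `u(x) = U(ξ)` whenever `x = y(ξ)`. -/
def Mu (X : LagQuad) : ℝ → ℝ := fun x => X.U (Function.invFun X.y x)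

/-- The Eulerian energy measure `μ = y_#(V' dξ)` of `M(X)`. -/
def Mmu (X : LagQuad) : Measure ℝ :=
  Measure.map X.y (volume.withDensity fun ξ => ENNReal.ofReal (deriv X.V ξ))

/-- The Eulerian past-energy measure `ν = y_#(H' dξ)` of `M(X)`. -/
def Mnu (X : LagQuad) : Measure ℝ :=
  Measure.map X.y (volume.withDensity fun ξ => ENNReal.ofReal (deriv X.H ξ))

/-- The set `D` of Eulerian coordinates `(u, μ, ν)`. -/
def inD (α : ℝ) (u : ℝ → ℝ) (μ ν : Measure ℝ) : Prop :=
  (∃ C, ∀ x, |u x| ≤ C) ∧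
  (∀ x y : ℝ, u y - u x = ∫ s in x..y, deriv u s) ∧
  MemLp (deriv u) 2 volume ∧
  IsFiniteMeasure μ ∧ IsFiniteMeasure ν ∧ μ ≤ ν ∧
  (μ.rnDeriv volume =ᵐ[volume] fun x => ENNReal.ofReal ((deriv u x) ^ 2)) ∧
  (α = 1 → μ = volume.withDensity (fun x => ENNReal.ofReal ((deriv u x) ^ 2)) ∧
    ν.rnDeriv volume =ᵐ[volume] fun x => ENNReal.ofReal ((deriv u x) ^ 2)) ∧
  (α < 1 → ∃ k : ℝ → ℝ, (∀ x, k x = 1 ∨ k x = 1 - α) ∧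
    (∀ x, deriv u x < 0 → k x = 1) ∧ μ = ν.withDensity (fun x => ENNReal.ofReal (k x)))

/-- `y(ξ) = sup { x : x + ν((−∞,x)) < ξ }` — the Lagrangian characteristic of `(u,μ,ν)`. -/
def yL (ν : Measure ℝ) (ξ : ℝ) : ℝ := sSup {x : ℝ | x + (ν (Set.Iio x)).toReal < ξ}

/-- The mapping `L : D → F₀` from Eulerian to Lagrangian coordinates. -/
def Lmap (u : ℝ → ℝ) (μ ν : Measure ℝ) : LagQuad :=
  ⟨yL ν, fun ξ => u (yL ν ξ), fun ξ => ξ - yL ν ξ,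
    fun ξ => ∫ η in Set.Iio ξ,
      deriv (fun ζ => ζ - yL ν ζ) η * (μ.rnDeriv ν (yL ν η)).toReal⟩

/-- The set `D_{0,M}` of Eulerian pairs `(u, μ)` with total energy at most `M`. -/
def inD0M (α M : ℝ) (u : ℝ → ℝ) (μ : Measure ℝ) : Prop :=
  (∃ C, ∀ x, |u x| ≤ C) ∧
  (∀ x y : ℝ, u y - u x = ∫ s in x..y, deriv u s) ∧
  MemLp (deriv u) 2 volume ∧
  IsFiniteMeasure μ ∧
  (μ.rnDeriv volume =ᵐ[volume] fun x => ENNReal.ofReal ((deriv u x) ^ 2)) ∧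
  (μ Set.univ).toReal ≤ M ∧
  (α = 1 → μ = volume.withDensity (fun x => ENNReal.ofReal ((deriv u x) ^ 2)))

/-- `J_D((u₁,μ₁),(u₂,μ₂)) = inf over admissible ν₁, ν₂ of d_D((u₁,μ₁,ν₁),(u₂,μ₂,ν₂))`. -/
def JD (α : ℝ) (u₁ : ℝ → ℝ) (μ₁ : Measure ℝ) (u₂ : ℝ → ℝ) (μ₂ : Measure ℝ) : ℝ :=
  sInf {r | ∃ ν₁ ν₂ : Measure ℝ, inD α u₁ μ₁ ν₁ ∧ inD α u₂ μ₂ ν₂ ∧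
    r = dFmet α (Lmap u₁ μ₁ ν₁) (Lmap u₂ μ₂ ν₂)}

/-- The Eulerian metric `d_M` on `D_{0,M}`. -/
def dMmet (α M : ℝ) (uA : ℝ → ℝ) (μA : Measure ℝ) (uB : ℝ → ℝ) (μB : Measure ℝ) : ℝ :=
  sInf {r | ∃ (N : ℕ) (us : ℕ → ℝ → ℝ) (μs : ℕ → Measure ℝ),
    (∀ n ≤ N, inD0M α M (us n) (μs n)) ∧
    us 0 = uA ∧ μs 0 = μA ∧ us N = uB ∧ μs N = μB ∧
    r = ∑ n ∈ Finset.range N, JD α (us (n + 1)) (μs (n + 1)) (us n) (μs n)}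

end


section Aux
open Function
open scoped NNReal

private lemma stj_apply' {g : ℝ → ℝ} (hm : Monotone g) (hc : Continuous g) (x : ℝ) :
    hm.stieltjesFunction x = g x := by
  rw [Monotone.stieltjesFunction_eq]
  exact rightLim_eq_of_tendsto
    (hc.continuousAt.tendsto.mono_left nhdsWithin_le_nhds)

private lemma stj_Ioc' {g : ℝ → ℝ} (hm : Monotone g) (hc : Continuous g) (a b : ℝ) :
    hm.stieltjesFunction.measure (Set.Ioc a b) = ENNReal.ofReal (g b - g a) := by
  rw [StieltjesFunction.measure_Ioc, stj_apply' hm hc, stj_apply' hm hc]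

private lemma lip_sub_le' {g : ℝ → ℝ} {K : ℝ≥0} (hK : LipschitzWith K g) (a b : ℝ)
    (hab : a ≤ b) : g b - g a ≤ (K : ℝ) * (b - a) := by
  have h1 := hK.dist_le_mul b a
  rw [Real.dist_eq, Real.dist_eq, abs_of_nonneg (by linarith : (0:ℝ) ≤ b - a)] at h1
  exact (abs_le.mp h1).2

private lemma stj_ac' {g : ℝ → ℝ} {K : ℝ≥0} (hm : Monotone g) (hK : LipschitzWith K g) :
    hm.stieltjesFunction.measure ≪ (volume : Measure ℝ) := by
  have hc : Continuous g := hK.continuous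
  have hhm : Monotone (fun x => (K : ℝ) * x - g x) := fun a b hab => by
    have := lip_sub_le' hK a b hab; dsimp only; linarith
  have hhc : Continuous (fun x => (K : ℝ) * x - g x) := by continuity
  have hlinm : Monotone (fun x : ℝ => (K : ℝ) * x) := fun a b hab =>
    mul_le_mul_of_nonneg_left hab K.2
  have hlinc : Continuous (fun x : ℝ => (K : ℝ) * x) := by continuity
  have hsum : hm.stieltjesFunction + hhm.stieltjesFunction = hlinm.stieltjesFunction := by
    apply StieltjesFunction.ext; intro x
    rw [StieltjesFunction.add_apply, stj_apply' hm hc, stj_apply' hhm hhc,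
      stj_apply' hlinm hlinc]
    ring
  have hlinmeas : hlinm.stieltjesFunction.measure = (K : ℝ≥0∞) • (volume : Measure ℝ) := by
    refine Measure.ext_of_Ioc _ _ (fun a b hab => ?_)
    rw [stj_Ioc' hlinm hlinc, Measure.smul_apply, Real.volume_Ioc, smul_eq_mul,
      ← ENNReal.ofReal_coe_nnreal, ← mul_sub]
    exact ENNReal.ofReal_mul K.2
  refine Measure.AbsolutelyContinuous.mk (fun s hsm hs0 => ?_)
  have he : hm.stieltjesFunction.measure s + hhm.stieltjesFunction.measure s
      = (K : ℝ≥0∞) * volume s := by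
    have h2 := (StieltjesFunction.measure_add hm.stieltjesFunction hhm.stieltjesFunction).symm
    rw [hsum, hlinmeas] at h2
    have h3 := congrArg (fun μ : Measure ℝ => μ s) h2
    simpa using h3
  have hle : hm.stieltjesFunction.measure s ≤ (K : ℝ≥0∞) * volume s :=
    le_trans (le_add_right le_rfl) he.le
  rw [hs0, mul_zero] at hle
  exact le_antisymm hle zero_le

private lemma stj_density' {g : ℝ → ℝ} {K : ℝ≥0} (hm : Monotone g) (hK : LipschitzWith K g) :
    (volume : Measure ℝ).withDensity (fun x => ENNReal.ofReal (deriv g x))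
      = hm.stieltjesFunction.measure := by
  have hac := stj_ac' hm hK
  have h1 : ∀ᵐ x : ℝ, deriv g x = (hm.stieltjesFunction.measure.rnDeriv volume x).toReal := by
    filter_upwards [hm.ae_hasDerivAt] with x hx using hx.deriv
  have h2 := Measure.rnDeriv_lt_top hm.stieltjesFunction.measure volume
  rw [← Measure.withDensity_rnDeriv_eq _ _ hac]
  apply withDensity_congr_ae
  filter_upwards [h1, h2] with x hx h'x
  rw [hx, ENNReal.ofReal_toReal h'x.ne]

private lemma lip_ftc_Ioc' {g : ℝ → ℝ} {K : ℝ≥0} (hm : Monotone g) (hK : LipschitzWith K g)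
    (a b : ℝ) :
    ∫⁻ x in Set.Ioc a b, ENNReal.ofReal (deriv g x) = ENNReal.ofReal (g b - g a) := by
  rw [← withDensity_apply _ measurableSet_Ioc, stj_density' hm hK, stj_Ioc' hm hK.continuous]

private lemma Wmono' {u : ℝ → ℝ} {K : ℝ≥0} (hK : LipschitzWith K u) :
    Monotone (fun x => u x + (K : ℝ) * x) := by
  intro a b hab
  have h3 := hK.dist_le_mul a b
  rw [Real.dist_eq, Real.dist_eq, abs_of_nonpos (by linarith : a - b ≤ 0), abs_le] at h3
  dsimp only; linarith [h3.1]

private lemma Wlip' {u : ℝ → ℝ} {K : ℝ≥0} (hK : LipschitzWith K u) :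
    LipschitzWith (K + K) (fun x => u x + (K : ℝ) * x) := by
  have h2 : LipschitzWith K (fun x : ℝ => (K : ℝ) * x) := by
    apply LipschitzWith.of_dist_le_mul
    intro x y
    rw [Real.dist_eq, Real.dist_eq, ← mul_sub, abs_mul]
    simp [abs_of_nonneg K.coe_nonneg]
  exact hK.add h2

private lemma Wderiv' {u : ℝ → ℝ} {K : ℝ≥0} (hK : LipschitzWith K u) :
    ∀ᵐ x : ℝ, deriv (fun x => u x + (K : ℝ) * x) x = deriv u x + (K : ℝ) := by
  have hdiffW := (Wmono' hK).ae_differentiableAt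
  filter_upwards [hdiffW] with x hx
  have hlin : DifferentiableAt ℝ (fun x : ℝ => (K : ℝ) * x) x := by fun_prop
  have hu : DifferentiableAt ℝ u x := by
    have h1 : DifferentiableAt ℝ (fun y => (fun x => u x + (K : ℝ) * x) y - (K : ℝ) * y) x :=
      hx.sub hlin
    simpa using h1
  rw [deriv_fun_add hu hlin, deriv_const_mul _ differentiableAt_fun_id, deriv_id'', mul_one]

private lemma mono_of_deriv_nonneg' {u : ℝ → ℝ} {K : ℝ≥0} (hK : LipschitzWith K u)
    (h : ∀ᵐ x : ℝ, 0 ≤ deriv u x) : Monotone u := by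
  intro a b hab
  set W : ℝ → ℝ := fun x => u x + (K : ℝ) * x with hW
  have hWm := Wmono' hK
  have hWK := Wlip' hK
  have h1 : ENNReal.ofReal ((K : ℝ) * (b - a)) ≤ ENNReal.ofReal (W b - W a) := by
    rw [← lip_ftc_Ioc' hWm hWK a b]
    calc ENNReal.ofReal ((K : ℝ) * (b - a))
        = ∫⁻ _ in Set.Ioc a b, ENNReal.ofReal (K : ℝ) := by
          rw [setLIntegral_const, Real.volume_Ioc, ← ENNReal.ofReal_mul K.coe_nonneg]
      _ ≤ ∫⁻ x in Set.Ioc a b, ENNReal.ofReal (deriv W x) := by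
          apply lintegral_mono_ae
          filter_upwards [ae_restrict_of_ae (h.and (Wderiv' hK))] with x hx
          rw [hx.2]
          exact ENNReal.ofReal_le_ofReal (by linarith [hx.1])
  have h2 : (K : ℝ) * (b - a) ≤ W b - W a :=
    (ENNReal.ofReal_le_ofReal_iff (sub_nonneg.mpr (hWm hab))).mp h1
  simp only [hW] at h2; linarith

private lemma const_on_zero_deriv' {u : ℝ → ℝ} {K : ℝ≥0} (hK : LipschitzWith K u) {a b : ℝ}
    (hab : a ≤ b) (h0 : ∀ᵐ x ∂(volume.restrict (Set.Ioc a b)), deriv u x = 0) :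
    u b = u a := by
  set W : ℝ → ℝ := fun x => u x + (K : ℝ) * x with hW
  have hWm := Wmono' hK
  have hWK := Wlip' hK
  have h1 : ENNReal.ofReal (W b - W a) = ENNReal.ofReal ((K : ℝ) * (b - a)) := by
    rw [← lip_ftc_Ioc' hWm hWK a b]
    calc (∫⁻ x in Set.Ioc a b, ENNReal.ofReal (deriv W x))
        = ∫⁻ _ in Set.Ioc a b, ENNReal.ofReal (K : ℝ) := by
          apply lintegral_congr_ae
          filter_upwards [h0, ae_restrict_of_ae (Wderiv' hK)] with x hx1 hx2
          rw [hx2, hx1, zero_add]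
      _ = ENNReal.ofReal ((K : ℝ) * (b - a)) := by
          rw [setLIntegral_const, Real.volume_Ioc, ← ENNReal.ofReal_mul K.coe_nonneg]
  have h2 : W b - W a = (K : ℝ) * (b - a) :=
    (ENNReal.ofReal_eq_ofReal_iff (sub_nonneg.mpr (hWm hab))
      (mul_nonneg K.coe_nonneg (by linarith))).mp h1
  simp only [hW] at h2; linarith

end Aux

/-- relabelling leaves the Eulerian coordinates unchanged: if `X ∈ F` and
`f ∈ G`, then `M(X • f) = M(X)`, i.e. the velocity `u`, the push-forward measure
`μ = y_#(V' dξ)` and `ν = y_#(H' dξ)` all agree for `X` and `X • f`. -/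
theorem statement15 (α : ℝ) (hα : α ∈ Set.Icc (0 : ℝ) 1)
    (X : LagQuad) (hX : inF α X) (f : ℝ → ℝ) (hf : inG f) :
    Mu (act X f) = Mu X ∧ Mmu (act X f) = Mmu X ∧ Mnu (act X f) = Mnu X := by
  classical
  obtain ⟨hyBL, hUBL, hHBL, hVBL, hy', hH', -, hyVU, hVH, -, -⟩ := hX
  obtain ⟨hbij, hfBL, -, -⟩ := hf
  -- Lipschitz constants
  obtain ⟨Ky, hKy0⟩ := hyBL.2
  obtain ⟨KU, hKU⟩ := hUBL.2
  obtain ⟨KH, hKH⟩ := hHBL.2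
  obtain ⟨KV, hKV⟩ := hVBL.2
  obtain ⟨Kf, hKf0⟩ := hfBL.2
  have hyLip : LipschitzWith (Ky + 1) X.y := by
    have h := hKy0.add LipschitzWith.id
    simpa [Function.id_def, sub_add_cancel] using h
  have hfLip : LipschitzWith (Kf + 1) f := by
    have h := hKf0.add LipschitzWith.id
    simpa [Function.id_def, sub_add_cancel] using h
  have hyc : Continuous X.y := hyLip.continuous
  have hfc : Continuous f := hfLip.continuous
  have hym : Measurable X.y := hyc.measurable
  have hfm : Measurable f := hfc.measurable
  -- a.e. nonnegativity of derivatives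
  have hV' : ∀ᵐ ξ : ℝ ∂volume, 0 ≤ deriv X.V ξ := hVH.mono fun ξ hξ => hξ.1
  -- monotonicity
  have hyMono : Monotone X.y := mono_of_deriv_nonneg' hyLip hy'
  have hVMono : Monotone X.V := mono_of_deriv_nonneg' hKV hV'
  have hHMono : Monotone X.H := mono_of_deriv_nonneg' hKH hH'
  -- f is strictly monotone
  have hsm : StrictMono f := by
    rcases hfc.strictMono_of_inj hbij.1 with hsm | hsa
    · exact hsm
    · exfalso
      obtain ⟨C, hC⟩ := hfBL.1
      have hC0 : (0:ℝ) ≤ C := le_trans (abs_nonneg _) (hC 0)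
      set x0 : ℝ := C + |f 0| + 1 with hx0def
      have hx0 : (0:ℝ) ≤ x0 := by
        have := abs_nonneg (f 0); simp only [hx0def]; linarith
      have h1 : f x0 ≤ f 0 := hsa.antitone hx0
      have h2 : -C ≤ f x0 - x0 := (abs_le.mp (hC x0)).1
      have h3 : f 0 ≤ |f 0| := le_abs_self _
      simp only [hx0def] at h2
      linarith
  set g : ℝ → ℝ := Function.invFun f with hg
  have hfg : ∀ x, f (g x) = x := fun x => Function.invFun_eq (hbij.2 x)
  have hpre : ∀ a b : ℝ, f ⁻¹' (Set.Ioc a b) = Set.Ioc (g a) (g b) := by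
    intro a b
    ext x
    simp only [Set.mem_preimage, Set.mem_Ioc]
    constructor
    · rintro ⟨h1, h2⟩
      refine ⟨hsm.lt_iff_lt.mp (by rw [hfg]; exact h1), hsm.le_iff_le.mp (by rw [hfg]; exact h2)⟩
    · rintro ⟨h1, h2⟩
      refine ⟨?_, ?_⟩
      · have := hsm.lt_iff_lt.mpr h1; rwa [hfg] at this
      · have := hsm.le_iff_le.mpr h2; rwa [hfg] at this
  -- the key push-forward identity
  have key : ∀ (W : ℝ → ℝ) (KW : NNReal), LipschitzWith KW W → Monotone W →
      Measure.map (fun ξ => X.y (f ξ))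
        (volume.withDensity fun ξ => ENNReal.ofReal (deriv (fun ξ => W (f ξ)) ξ))
      = Measure.map X.y (volume.withDensity fun ξ => ENNReal.ofReal (deriv W ξ)) := by
    intro W KW hKW hWm
    have hWfm : Monotone (fun ξ => W (f ξ)) := fun a b hab => hWm (hsm.monotone hab)
    have hWfK : LipschitzWith (KW * (Kf + 1)) (fun ξ => W (f ξ)) := hKW.comp hfLip
    rw [stj_density' hWfm hWfK, stj_density' hWm hKW]
    have hcomp : (fun ξ => X.y (f ξ)) = X.y ∘ f := rfl
    rw [hcomp, ← Measure.map_map hym hfm]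
    congr 1
    refine Measure.ext_of_Ioc' _ _ (fun a b hab => ?_) (fun a b hab => ?_)
    · rw [Measure.map_apply hfm measurableSet_Ioc, hpre, stj_Ioc' hWfm hWfK.continuous]
      exact ENNReal.ofReal_ne_top
    · rw [Measure.map_apply hfm measurableSet_Ioc, hpre, stj_Ioc' hWfm hWfK.continuous,
        stj_Ioc' hWm hKW.continuous, hfg, hfg]
  -- surjectivity of y
  obtain ⟨Cy, hCy⟩ := hyBL.1
  have htop : Tendsto X.y atTop atTop := by
    apply tendsto_atTop_mono (fun ξ => ?_) (tendsto_atTop_add_const_right atTop (-Cy) tendsto_id)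
    have h2 : -Cy ≤ X.y ξ - ξ := (abs_le.mp (hCy ξ)).1
    simp only [id_eq]
    linarith
  have hbot : Tendsto X.y atBot atBot := by
    apply tendsto_atBot_mono (fun ξ => ?_) (tendsto_atBot_add_const_right atBot Cy tendsto_id)
    have h2 : X.y ξ - ξ ≤ Cy := (abs_le.mp (hCy ξ)).2
    simp only [id_eq]
    linarith
  have ysurj : Function.Surjective X.y := hyc.surjective htop hbot
  -- U is constant on the fibres of y
  have hconst : ∀ a b : ℝ, a ≤ b → X.y a = X.y b → X.U a = X.U b := by
    intro a b hab hyab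
    have hz : ∫⁻ x in Set.Ioc a b, ENNReal.ofReal (deriv X.y x) = 0 := by
      rw [lip_ftc_Ioc' hyMono hyLip, hyab, sub_self, ENNReal.ofReal_zero]
    have hz2 := (lintegral_eq_zero_iff
      (ENNReal.measurable_ofReal.comp (measurable_deriv X.y))).mp hz
    have h3 : ∀ᵐ x ∂(volume.restrict (Set.Ioc a b)), deriv X.U x = 0 := by
      filter_upwards [hz2, ae_restrict_of_ae hy', ae_restrict_of_ae hyVU] with x h1 h2 h4
      have hy0 : deriv X.y x = 0 := by
        have h1' : ENNReal.ofReal (deriv X.y x) = 0 := h1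
        exact le_antisymm (ENNReal.ofReal_eq_zero.mp h1') h2
      have h5 : deriv X.U x ^ 2 = 0 := by rw [← h4, hy0, zero_mul]
      exact pow_eq_zero_iff two_ne_zero |>.mp h5
    exact (const_on_zero_deriv' hKU hab h3).symm
  refine ⟨?_, ?_, ?_⟩
  · -- the velocity u
    funext x
    simp only [Mu, act]
    have hyfsurj : Function.Surjective (fun ξ => X.y (f ξ)) := by
      intro z
      obtain ⟨ξ, hξ⟩ := ysurj z
      obtain ⟨η, hη⟩ := hbij.2 ξ
      exact ⟨η, by show X.y (f η) = z; rw [hη, hξ]⟩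
    have e1 : X.y (f (Function.invFun (fun ξ => X.y (f ξ)) x)) = x :=
      Function.invFun_eq (hyfsurj x)
    have e2 : X.y (Function.invFun X.y x) = x := Function.invFun_eq (ysurj x)
    have e3 : X.y (f (Function.invFun (fun ξ => X.y (f ξ)) x))
        = X.y (Function.invFun X.y x) := e1.trans e2.symm
    rcases le_total (f (Function.invFun (fun ξ => X.y (f ξ)) x)) (Function.invFun X.y x) with h | h
    · exact hconst _ _ h e3
    · exact (hconst _ _ h e3.symm).symm
  · -- the measure μ
    have h := key X.V KV hKV hVMono
    simpa [Mmu, act] using h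
  · -- the measure ν
    have h := key X.H KH hKH hHMono
    simpa [Mnu, act] using h
end

section
/- Let M > 0. Let y_A, y_B : ℝ → ℝ be continuous, nondecreasing and surjective, let U_A, U_B : ℝ → ℝ be bounded, and let u_A, u_B : ℝ → ℝ satisfy u_A(y_A(ξ)) = U_A(ξ) and u_B(y_B(ξ)) = U_B(ξ) for all ξ ∈ ℝ. Assume u_B is locally absolutely continuous with ∫_ℝ u_B'(x)² dx ≤ M. Then for every x ∈ ℝ, |u_A(x) − u_B(x)| ≤ ‖U_A − U_B‖_{L∞} + √(M·‖y_A − y_B‖_{L∞}). -/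
open MeasureTheory intervalIntegral

lemma holder_sqrt_aux (f : ℝ → ℝ) (hmeas : AEStronglyMeasurable f volume)
    (hint : Integrable (fun x => f x ^ 2)) (a b : ℝ) (hab : a ≤ b) :
    |∫ s in a..b, f s| ≤ Real.sqrt (∫ x : ℝ, f x ^ 2) * Real.sqrt (b - a) := by
  have hL2 : MemLp f 2 (volume : Measure ℝ) :=
    (memLp_two_iff_integrable_sq hmeas).2 hint
  have hL2r : MemLp f 2 (volume.restrict (Set.Ioc a b)) := hL2.restrict _
  have hconj : Real.HolderConjugate 2 2 := by constructor <;> norm_num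
  have h1 : MemLp (fun _ : ℝ => (1 : ℝ)) (ENNReal.ofReal 2)
      (volume.restrict (Set.Ioc a b)) := by
    simp only [ENNReal.ofReal_ofNat]
    exact memLp_const 1
  have habs : MemLp (fun x => |f x|) (ENNReal.ofReal 2)
      (volume.restrict (Set.Ioc a b)) := by
    simp only [ENNReal.ofReal_ofNat]
    exact hL2r.abs
  have key := integral_mul_le_Lp_mul_Lq_of_nonneg hconj
    (f := fun x => |f x|) (g := fun _ => (1 : ℝ))
    (Filter.Eventually.of_forall fun x => abs_nonneg _)
    (Filter.Eventually.of_forall fun x => zero_le_one) habs h1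
  have step1 : |∫ s in a..b, f s| ≤ ∫ x in Set.Ioc a b, |f x| := by
    rw [intervalIntegral.integral_of_le hab]
    exact (norm_integral_le_integral_norm f).trans_eq (by simp [Real.norm_eq_abs])
  have e1 : ∫ x in Set.Ioc a b, |f x| * (1 : ℝ) = ∫ x in Set.Ioc a b, |f x| := by
    simp
  have e2 : ∫ x in Set.Ioc a b, |f x| ^ (2 : ℝ) = ∫ x in Set.Ioc a b, f x ^ 2 := by
    apply MeasureTheory.integral_congr_ae
    filter_upwards with x
    rw [show ((2 : ℝ)) = ((2 : ℕ) : ℝ) by norm_num, Real.rpow_natCast, sq_abs]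
  have e3 : ∫ _ : ℝ in Set.Ioc a b, (1 : ℝ) ^ (2 : ℝ) = b - a := by
    simp [Real.volume_Ioc, ENNReal.toReal_ofReal (sub_nonneg.2 hab), hab]
  rw [e1, e2, e3] at key
  have hsetle : ∫ x in Set.Ioc a b, f x ^ 2 ≤ ∫ x : ℝ, f x ^ 2 :=
    setIntegral_le_integral hint (Filter.Eventually.of_forall fun x => sq_nonneg _)
  calc |∫ s in a..b, f s| ≤ ∫ x in Set.Ioc a b, |f x| := step1
    _ ≤ (∫ x in Set.Ioc a b, f x ^ 2) ^ (1/2 : ℝ) * (b - a) ^ (1/2 : ℝ) := key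
    _ ≤ (∫ x : ℝ, f x ^ 2) ^ (1/2 : ℝ) * (b - a) ^ (1/2 : ℝ) := by
        apply mul_le_mul_of_nonneg_right
        · exact Real.rpow_le_rpow (setIntegral_nonneg measurableSet_Ioc fun x _ => sq_nonneg _)
            hsetle (by norm_num)
        · exact Real.rpow_nonneg (sub_nonneg.2 hab) _
    _ = Real.sqrt (∫ x : ℝ, f x ^ 2) * Real.sqrt (b - a) := by
        rw [Real.sqrt_eq_rpow, Real.sqrt_eq_rpow]

/-- if `y_A, y_B` are continuous nondecreasing surjections, `U_A, U_B` are
bounded, `u_A∘y_A = U_A`, `u_B∘y_B = U_B`, `u_B` is locally absolutely continuous with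
`∫ u_B'² ≤ M`, then for all `x`,
`|u_A(x) − u_B(x)| ≤ ‖U_A − U_B‖_{L∞} + √(M·‖y_A − y_B‖_{L∞})`
(the sup-norms being expressed via arbitrary upper bounds). -/
theorem statement17 (M : ℝ) (hM : 0 < M)
    (yA yB : ℝ → ℝ)
    (hyAc : Continuous yA) (hyAm : Monotone yA) (hyAs : Function.Surjective yA)
    (hyBc : Continuous yB) (hyBm : Monotone yB) (hyBs : Function.Surjective yB)
    (UA UB : ℝ → ℝ)
    (hUA : ∃ C, ∀ ξ, |UA ξ| ≤ C) (hUB : ∃ C, ∀ ξ, |UB ξ| ≤ C)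
    (uA uB : ℝ → ℝ)
    (huA : ∀ ξ, uA (yA ξ) = UA ξ) (huB : ∀ ξ, uB (yB ξ) = UB ξ)
    (huBac : ∀ x y : ℝ, uB y - uB x = ∫ s in x..y, deriv uB s)
    (huBint : Integrable (fun x => (deriv uB x) ^ 2))
    (huBM : ∫ x : ℝ, (deriv uB x) ^ 2 ≤ M)
    (CU Cy : ℝ)
    (hCU : ∀ ξ, |UA ξ - UB ξ| ≤ CU) (hCy : ∀ ξ, |yA ξ - yB ξ| ≤ Cy) :
    ∀ x : ℝ, |uA x - uB x| ≤ CU + Real.sqrt (M * Cy) := by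
  intro x
  obtain ⟨ξ, hξ⟩ := hyAs x
  have hmeas : AEStronglyMeasurable (deriv uB) volume :=
    (measurable_deriv uB).aestronglyMeasurable
  -- Hölder bound for |uB y - uB x| when x ≤ y or y ≤ x
  have holder : ∀ a b : ℝ, |a - b| ≤ Cy → |uB b - uB a| ≤ Real.sqrt (M * Cy) := by
    intro a b hab
    have key : ∀ c d : ℝ, c ≤ d → d - c ≤ Cy →
        |uB d - uB c| ≤ Real.sqrt (M * Cy) := by
      intro c d hcd hle
      rw [huBac c d]
      refine (holder_sqrt_aux (deriv uB) hmeas huBint c d hcd).trans ?_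
      rw [Real.sqrt_mul hM.le]
      apply mul_le_mul
      · exact Real.sqrt_le_sqrt huBM
      · exact Real.sqrt_le_sqrt hle
      · exact Real.sqrt_nonneg _
      · exact Real.sqrt_nonneg _
    rcases le_total a b with h | h
    · rw [abs_sub_comm] at hab
      exact key a b h ((le_abs_self _).trans hab)
    · rw [abs_sub_comm]
      exact key b a h ((le_abs_self _).trans hab)
  have hyBd : |yA ξ - yB ξ| ≤ Cy := hCy ξ
  calc |uA x - uB x| = |(UA ξ - UB ξ) + (uB (yB ξ) - uB x)| := by
        rw [← hξ, huA ξ, huB ξ]; ring_nf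
    _ ≤ |UA ξ - UB ξ| + |uB (yB ξ) - uB x| := abs_add_le _ _
    _ ≤ CU + Real.sqrt (M * Cy) := by
        refine add_le_add (hCU ξ) (holder x (yB ξ) ?_)
        rw [← hξ]; exact hyBd
end
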